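/- Define u_0(d) = 1 and u_H(d) = C(u_{H-1}(d) + d, d). Then for every H ≥ 2 and d ≥ 2, u_H(d) ≥ (2 + 1/d)^{d^{H-1}} / d^{(d^{H-1}-1)/(d-1) - 1}. -/

import Mathlib

/-- `u_0(d) = 1`, `u_H(d) = C(u_{H-1}(d) + d, d)`. -/
def u (d : ℕ) : ℕ → ℕ
  | 0 => 1
  | H + 1 => Nat.choose (u d H + d) d

open Finset in
lemma nat_choose_bound (n k : ℕ) (h : k ≤ n) : n ^ k ≤ n.choose k * k ^ k := by
  have key : n ^ k * k.factorial ≤ n.descFactorial k * k ^ k := by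
    have h1 : n ^ k * k.factorial = ∏ i ∈ range k, n * (k - i) := by
      rw [prod_mul_distrib, prod_const, card_range]
      congr 1
      have : ∀ i ∈ range k, k - i = k - 1 - i + 1 := by
        intro i hi; simp at hi; omega
      rw [prod_congr rfl this, prod_range_reflect (fun j => j + 1) k,
        Finset.prod_range_add_one_eq_factorial]
    have h2 : n.descFactorial k * k ^ k = ∏ i ∈ range k, (n - i) * k := by
      rw [prod_mul_distrib, ← Nat.descFactorial_eq_prod_range, prod_const, card_range]
    rw [h1, h2]
    apply Finset.prod_le_prod' 
    intro i hi
    simp only [mem_range] at hi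
    have hik : i ≤ k := hi.le
    calc n * (k - i) = n * k - n * i := by rw [Nat.mul_sub]
      _ ≤ n * k - i * k := Nat.sub_le_sub_left (by
          calc i * k ≤ i * n := Nat.mul_le_mul_left i h
            _ = n * i := Nat.mul_comm i n) _
      _ = (n - i) * k := by rw [Nat.sub_mul]
  rw [Nat.descFactorial_eq_factorial_mul_choose, mul_assoc,
    mul_comm (n ^ k)] at key
  exact Nat.le_of_mul_le_mul_left key k.factorial_pos

lemma real_choose_bound (n k : ℕ) (h : k ≤ n) :
    ((n : ℝ) / k) ^ k ≤ n.choose k := by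
  rcases Nat.eq_zero_or_pos k with hk | hk
  · simp [hk]
  have hkpos : (0:ℝ) < (k:ℝ) ^ k := by positivity
  rw [div_pow, div_le_iff₀ hkpos]
  exact_mod_cast nat_choose_bound n k h


/-- For `H ≥ 2` and `d ≥ 2`,
`u_H(d) ≥ (2 + 1/d)^{d^{H-1}} / d^{(d^{H-1}-1)/(d-1) - 1}`. -/
theorem stmt_3 (H d : ℕ) (hH : 2 ≤ H) (hd : 2 ≤ d) :
    (u d H : ℝ) ≥
      (2 + 1 / (d : ℝ)) ^ ((d : ℝ) ^ (H - 1)) /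
        (d : ℝ) ^ (((d : ℝ) ^ (H - 1) - 1) / ((d : ℝ) - 1) - 1) := by
  have hx2 : (2:ℝ) ≤ (d:ℝ) := by exact_mod_cast hd
  have hx0 : (0:ℝ) < (d:ℝ) := by linarith
  have hx1 : (d:ℝ) - 1 ≠ 0 := by intro h; linarith [sub_eq_zero.mp h]
  have hb0 : (0:ℝ) < 2 + 1 / (d:ℝ) := by positivity
  induction H, hH using Nat.le_induction with
  | base =>
    have hu1 : u d 1 = d + 1 := by
      show (1 + d).choose d = d + 1
      rw [Nat.add_comm, Nat.choose_succ_self_right]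
    have hu2 : u d 2 = (2 * d + 1).choose d := by
      show (u d 1 + d).choose d = _
      rw [hu1]; congr 1; omega
    rw [hu2]
    have key : ((2 * (d:ℝ) + 1) / d) ^ d ≤ (((2 * d + 1).choose d : ℕ) : ℝ) := by
      have := real_choose_bound (2 * d + 1) d (by omega)
      push_cast at this ⊢
      exact this
    have e1 : ((d:ℝ)) ^ (2 - 1 : ℕ) = (d:ℝ) := pow_one _
    rw [e1, div_self hx1, sub_self, Real.rpow_zero, div_one, Real.rpow_natCast]
    have : (2 + 1 / (d:ℝ)) = (2 * (d:ℝ) + 1) / d := by field_simp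
    rw [this]
    exact key
  | succ H hH ih =>
    set x := (d:ℝ)
    have hH1 : H - 1 + 1 = H := by omega
    set r : ℝ := x ^ (H - 1) with hr
    set e : ℝ := (r - 1) / (x - 1) - 1 with he
    set A : ℝ := (2 + 1 / x) ^ r / x ^ e with hA
    have hA0 : 0 ≤ A := by positivity
    have hxH : x ^ (H + 1 - 1) = r * x := by
      rw [Nat.add_sub_cancel, ← hH1, pow_succ]
    rw [hxH]
    have step1 : (((u d H : ℝ) + x) / x) ^ d ≤ (u d (H + 1) : ℝ) := by
      have := real_choose_bound (u d H + d) d (by omega)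
      push_cast at this
      exact this
    have step2 : (A / x) ^ d ≤ (((u d H : ℝ) + x) / x) ^ d := by
      have h1 : A ≤ (u d H : ℝ) + x := by linarith [ih]
      exact pow_le_pow_left₀ (by positivity) (by gcongr) d
    have key : (A / x) ^ d =
        (2 + 1 / x) ^ (r * x) / x ^ ((r * x - 1) / (x - 1) - 1) := by
      rw [← Real.rpow_natCast (A / x) d, Real.div_rpow hA0 hx0.le, hA,
        Real.div_rpow (by positivity) (by positivity),
        ← Real.rpow_mul hb0.le, ← Real.rpow_mul hx0.le, div_div,
        ← Real.rpow_add hx0]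
      congr 1
      rw [he]
      field_simp
      ring_nf
      simp only [x]
      ring
    linarith [step1, step2, key.ge, key.le]
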